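/- Let 0 → A → B → C → 0 be a short exact sequence of divisible-by-finite commutative groups. Writing π₁(G) for the kernel of the projection ρ : Ĝ → G (where Ĝ is the inverse limit along multiplication maps) and π₀(G) := G/G° where G° = ⋂_n nG, there is an exact sequence 0 → π₁(A) → π₁(B) → π₁(C) → π₀(A) → π₀(B) → π₀(C) → 0. -/

import Mathlib

/-- The inverse limit `Ĝ = lim← (G, [m])`: coherent families `(g_n)_{n : ℕ+}`
with `m • g_{n*m} = g_n`, as a subgroup of the product. -/
def Coherent (G : Type*) [AddCommGroup G] : AddSubgroup (ℕ+ → G) where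
  carrier := {g | ∀ n m : ℕ+, (m : ℕ) • g (n * m) = g n}
  zero_mem' := by intro n m; simp
  add_mem' := by
    intro a b ha hb n m
    simp only [Pi.add_apply, smul_add, ha n m, hb n m]
  neg_mem' := by
    intro a ha n m
    simp only [Pi.neg_apply, smul_neg, ha n m]


/-- Multiplication by `n` as an additive group homomorphism. -/
def nsmulHom (G : Type*) [AddCommGroup G] (n : ℕ) : G →+ G where
  toFun x := n • x
  map_zero' := smul_zero n
  map_add' a b := smul_add n a b

/-- `G` is divisible-by-finite: the divisible hull `G° = ⋂_{n≥1} nG`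
has finite index in `G`. -/
def DivisibleByFinite (G : Type*) [AddCommGroup G] : Prop :=
  (⨅ n : ℕ+, (nsmulHom G (n : ℕ)).range).FiniteIndex

/-- The functorially induced map `Ĝ → Ĥ` on inverse limits. -/
def hatMap {A B : Type*} [AddCommGroup A] [AddCommGroup B] (f : A →+ B) :
    Coherent A →+ Coherent B where
  toFun x := ⟨fun n => f (x.1 n), fun n m => by rw [← map_nsmul, x.2 n m]⟩
  map_zero' := by
    apply Subtype.ext; funext n
    simp
  map_add' a b := by
    apply Subtype.ext; funext n
    simp

/-- The projection `ρ = ρ₁ : Ĝ → G` onto the first coordinate. -/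
def rho (G : Type*) [AddCommGroup G] : Coherent G →+ G where
  toFun x := x.1 1
  map_zero' := rfl
  map_add' a b := rfl

/-- `π₁(G) := ker (ρ : Ĝ → G)`. -/
def pi1 (G : Type*) [AddCommGroup G] : AddSubgroup (Coherent G) := (rho G).ker

/-- The divisible hull `G° = ⋂_{n ≥ 1} nG`. -/
def hull (G : Type*) [AddCommGroup G] : AddSubgroup G :=
  ⨅ n : ℕ+, (nsmulHom G (n : ℕ)).range

/-- `π₀(G) := G / G°`. -/
abbrev pi0 (G : Type*) [AddCommGroup G] := G ⧸ hull G

/-- The induced map `π₁(A) → π₁(B)`. -/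
def pi1Map {A B : Type*} [AddCommGroup A] [AddCommGroup B] (f : A →+ B) :
    pi1 A →+ pi1 B where
  toFun x := ⟨hatMap f x.1, by
    have h : ((x : Coherent A) : ℕ+ → A) 1 = 0 := x.2
    show f (((x : Coherent A) : ℕ+ → A) 1) = 0
    rw [h, map_zero]⟩
  map_zero' := by
    apply Subtype.ext; apply Subtype.ext; funext n; simp
  map_add' a b := by
    apply Subtype.ext; apply Subtype.ext; funext n; simp

/-- The induced map `π₀(A) → π₀(B)`. -/
def pi0Map {A B : Type*} [AddCommGroup A] [AddCommGroup B] (f : A →+ B) :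
    pi0 A →+ pi0 B :=
  QuotientAddGroup.map _ _ f (by
    intro x hx
    simp only [hull, AddSubgroup.mem_iInf, AddSubgroup.mem_comap] at *
    intro n
    obtain ⟨y, hy⟩ := hx n
    exact ⟨f y, by simpa [nsmulHom, ← map_nsmul] using congrArg f hy⟩)

section Helpers

variable {G : Type*} [AddCommGroup G]

lemma mem_hull_iff {x : G} : x ∈ hull G ↔ ∀ n : ℕ+, ∃ y : G, (n : ℕ) • y = x := by
  constructor
  · intro h n
    obtain ⟨y, hy⟩ := AddSubgroup.mem_iInf.mp h n
    exact ⟨y, hy⟩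
  · intro h
    refine AddSubgroup.mem_iInf.mpr fun n => ?_
    obtain ⟨y, hy⟩ := h n
    exact ⟨y, hy⟩

lemma rho_one_mem_hull (x : Coherent G) : (x : ℕ+ → G) 1 ∈ hull G :=
  mem_hull_iff.mpr fun n => ⟨(x : ℕ+ → G) (1 * n), x.2 1 n⟩

lemma exists_nsmul_mem_hull (hG : DivisibleByFinite G) :
    ∃ K : ℕ+, ∀ x : G, (K : ℕ) • x ∈ hull G := by
  have h : (hull G).FiniteIndex := hG
  refine ⟨⟨(hull G).index, Nat.pos_of_ne_zero h.1⟩, fun x => ?_⟩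
  exact AddSubgroup.nsmul_index_mem (hull G) x

lemma hull_div (hG : DivisibleByFinite G) (x : hull G) (n : ℕ+) :
    ∃ y : hull G, (n : ℕ) • y = x := by
  obtain ⟨K, hK⟩ := exists_nsmul_mem_hull hG
  obtain ⟨z, hz⟩ := mem_hull_iff.mp x.2 (n * K)
  refine ⟨⟨(K : ℕ) • z, hK z⟩, ?_⟩
  apply Subtype.ext
  show (n : ℕ) • ((K : ℕ) • z) = (x : G)
  rw [smul_smul]
  simpa [PNat.mul_coe] using hz

lemma chain_rel (β : ℕ → G) (hβ : ∀ j, (j + 1) • β (j + 1) = β j) :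
    ∀ a b : ℕ, a ≤ b → (b.factorial / a.factorial) • β b = β a := by
  intro a b
  induction b with
  | zero =>
    intro h
    obtain rfl : a = 0 := Nat.le_zero.mp h
    simp
  | succ b ih =>
    intro h
    rcases Nat.eq_or_lt_of_le h with rfl | h'
    · rw [Nat.div_self (Nat.factorial_pos _)]; simp
    · have hab : a ≤ b := Nat.lt_succ_iff.mp h'
      have h1 : a.factorial ∣ b.factorial := Nat.factorial_dvd_factorial hab
      rw [← ih hab, ← hβ b, smul_smul]
      congr 1
      rw [Nat.factorial_succ, Nat.mul_div_assoc _ h1, Nat.mul_comm]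

lemma fact_coeff (n m : ℕ) (hn : 0 < n) (hm : 0 < m) :
    m * ((n * m).factorial / (n * m)) = n.factorial / n * ((n * m).factorial / n.factorial) := by
  have hnm : 0 < n * m := Nat.mul_pos hn hm
  have d1 : n ∣ n.factorial := Nat.dvd_factorial hn le_rfl
  have d2 : n.factorial ∣ (n * m).factorial :=
    Nat.factorial_dvd_factorial (Nat.le_mul_of_pos_right n hm)
  have d3 : (n * m) ∣ (n * m).factorial := Nat.dvd_factorial hnm le_rfl
  apply Nat.eq_of_mul_eq_mul_right hn
  calc m * ((n * m).factorial / (n * m)) * n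
      = (n * m).factorial / (n * m) * (n * m) := by ring
    _ = (n * m).factorial := Nat.div_mul_cancel d3
    _ = (n * m).factorial / n.factorial * n.factorial := (Nat.div_mul_cancel d2).symm
    _ = (n * m).factorial / n.factorial * (n.factorial / n * n) := by
        rw [Nat.div_mul_cancel d1]
    _ = n.factorial / n * ((n * m).factorial / n.factorial) * n := by ring

lemma chain_coherent (β : ℕ → G) (hβ : ∀ j, (j + 1) • β (j + 1) = β j) :
    (fun n : ℕ+ => (((n : ℕ)).factorial / (n : ℕ)) • β (n : ℕ)) ∈ Coherent G := by
  intro n m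
  show (m : ℕ) • ((((n * m : ℕ+) : ℕ)).factorial / ((n * m : ℕ+) : ℕ)) • β ((n * m : ℕ+) : ℕ)
      = (((n : ℕ)).factorial / (n : ℕ)) • β (n : ℕ)
  have hrel := chain_rel β hβ (n : ℕ) ((n : ℕ) * (m : ℕ)) (Nat.le_mul_of_pos_right _ m.2)
  simp only [PNat.mul_coe]
  rw [← hrel, smul_smul, smul_smul]
  congr 1
  exact fact_coeff (n : ℕ) (m : ℕ) n.2 m.2

lemma exists_coherent_of_mem_hull (hG : DivisibleByFinite G) {x : G} (hx : x ∈ hull G) :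
    ∃ w : Coherent G, (w : ℕ+ → G) 1 = x := by
  classical
  let z : ℕ → hull G := fun j =>
    Nat.rec ⟨x, hx⟩ (fun j zj => (hull_div hG zj ⟨j + 1, j.succ_pos⟩).choose) j
  have hz : ∀ j, (j + 1) • z (j + 1) = z j := fun j =>
    (hull_div hG (z j) ⟨j + 1, j.succ_pos⟩).choose_spec
  set β : ℕ → G := fun j => (z j).1 with hβdef
  have hβ : ∀ j, (j + 1) • β (j + 1) = β j := by
    intro j
    have := congrArg (Subtype.val) (hz j)
    simpa using this
  refine ⟨⟨_, chain_coherent β hβ⟩, ?_⟩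
  show (((1 : ℕ+) : ℕ).factorial / ((1 : ℕ+) : ℕ)) • β ((1 : ℕ+) : ℕ) = x
  have h0 := hβ 0
  simp only [zero_add, one_smul] at h0
  have hx0 : β 0 = x := rfl
  have h1 : β 1 = x := by simpa using h0.trans hx0
  simpa using h1

end Helpers

section Big

variable {A B C : Type*} [AddCommGroup A] [AddCommGroup B] [AddCommGroup C]

lemma hat_exact (f : A →+ B) (g : B →+ C) (hf : Function.Injective f)
    (hfg : Function.Exact f g) (b : Coherent B) (hb : hatMap g b = 0) :
    ∃ a : Coherent A, hatMap f a = b := by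
  classical
  have hcomp : ∀ n : ℕ+, g (b.1 n) = 0 := by
    intro n
    have := congrArg (fun t : Coherent C => (t : ℕ+ → C) n) hb
    simpa [hatMap] using this
  choose a ha using fun n => (hfg (b.1 n)).mp (hcomp n)
  have hcoh : (fun n => a n) ∈ Coherent A := by
    intro n m
    apply hf
    rw [map_nsmul, ha, ha]
    exact b.2 n m
  refine ⟨⟨fun n => a n, hcoh⟩, ?_⟩
  apply Subtype.ext; funext n
  exact ha n

lemma hatMap_g_surjective (f : A →+ B) (g : B →+ C) (hg : Function.Surjective g)
    (hfg : Function.Exact f g) (hA : DivisibleByFinite A) :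
    Function.Surjective (hatMap (A := B) (B := C) g) := by
  classical
  obtain ⟨K, hK⟩ := exists_nsmul_mem_hull hA
  choose s hs using hg
  intro c
  set N : ℕ → ℕ+ := fun j => ⟨j.factorial * K, Nat.mul_pos j.factorial_pos K.2⟩ with hN
  have hcoN : ∀ j : ℕ, ((j : ℕ) + 1) • c.1 (N (j + 1)) = c.1 (N j) := by
    intro j
    have hidx : N j * ⟨j + 1, j.succ_pos⟩ = N (j + 1) := by
      apply Subtype.ext
      show j.factorial * (K : ℕ) * (j + 1) = (j + 1).factorial * (K : ℕ)
      rw [Nat.factorial_succ]; ring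
    have := c.2 (N j) ⟨j + 1, j.succ_pos⟩
    rw [hidx] at this
    exact this
  have hu : ∀ j : ℕ, ∃ a : A, f a = (j + 1) • s (c.1 (N (j + 1))) - s (c.1 (N j)) := by
    intro j
    refine (hfg _).mp ?_
    rw [map_sub, map_nsmul, hs, hs, hcoN j, sub_self]
  choose a ha using hu
  let h : ℕ → hull A := fun j =>
    Nat.rec (0 : hull A)
      (fun j hj => (hull_div hA (hj - ⟨(K : ℕ) • a j, hK _⟩) ⟨j + 1, j.succ_pos⟩).choose) j
  have hh : ∀ j, (j + 1) • h (j + 1) = h j - ⟨(K : ℕ) • a j, hK _⟩ := fun j =>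
    (hull_div hA (h j - ⟨(K : ℕ) • a j, hK _⟩) ⟨j + 1, j.succ_pos⟩).choose_spec
  set β : ℕ → B := fun j => (K : ℕ) • s (c.1 (N j)) + f (h j).1 with hβdef
  have hβ : ∀ j, (j + 1) • β (j + 1) = β j := by
    intro j
    have e1 : ((j : ℕ) + 1) • (h (j + 1)).1 = (h j).1 - (K : ℕ) • a j := by
      have := congrArg (Subtype.val) (hh j)
      simpa using this
    have e2 : ((j : ℕ) + 1) • s (c.1 (N (j + 1))) = f (a j) + s (c.1 (N j)) := by
      rw [ha j]; abel
    show (j + 1) • ((K : ℕ) • s (c.1 (N (j + 1))) + f (h (j + 1)).1)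
        = (K : ℕ) • s (c.1 (N j)) + f (h j).1
    rw [smul_add, smul_comm, e2, ← map_nsmul, e1, smul_add, map_sub, map_nsmul]
    abel
  have hgβ : ∀ j, g (β j) = c.1 ⟨j.factorial, j.factorial_pos⟩ := by
    intro j
    set Fj : ℕ+ := ⟨j.factorial, j.factorial_pos⟩ with hFj
    have hidx : Fj * K = N j := rfl
    have hco : (K : ℕ) • c.1 (N j) = c.1 Fj := by
      have := c.2 Fj K
      rw [hidx] at this
      exact this
    show g ((K : ℕ) • s (c.1 (N j)) + f (h j).1) = _
    rw [map_add, map_nsmul, hs, hfg.apply_apply_eq_zero, add_zero, hco]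
  refine ⟨⟨_, chain_coherent β hβ⟩, ?_⟩
  apply Subtype.ext; funext n
  show g ((((n : ℕ).factorial / (n : ℕ)) • β (n : ℕ))) = c.1 n
  rw [map_nsmul, hgβ]
  have hd : (n : ℕ) ∣ (n : ℕ).factorial := Nat.dvd_factorial n.2 le_rfl
  have hpos : 0 < (n : ℕ).factorial / (n : ℕ) :=
    Nat.div_pos (Nat.le_of_dvd (Nat.factorial_pos _) hd) n.2
  set q : ℕ+ := ⟨(n : ℕ).factorial / (n : ℕ), hpos⟩ with hq
  have hidx : n * q = ⟨(n : ℕ).factorial, Nat.factorial_pos _⟩ := by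
    apply Subtype.ext
    show (n : ℕ) * ((n : ℕ).factorial / (n : ℕ)) = (n : ℕ).factorial
    exact Nat.mul_div_cancel' hd
  have := c.2 n q
  rw [hidx] at this
  exact this

end Big

/-- The six-term exact sequence
`0 → π₁(A) → π₁(B) → π₁(C) → π₀(A) → π₀(B) → π₀(C) → 0`
associated to a short exact sequence of divisible-by-finite abelian groups. -/
theorem stmt5 {A B C : Type*} [AddCommGroup A] [AddCommGroup B] [AddCommGroup C]
    (f : A →+ B) (g : B →+ C)
    (hf : Function.Injective f) (hg : Function.Surjective g)
    (hfg : Function.Exact f g)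
    (hA : DivisibleByFinite A) (hB : DivisibleByFinite B) (hC : DivisibleByFinite C) :
    ∃ δ : pi1 C →+ pi0 A,
      Function.Injective (pi1Map f) ∧
      Function.Exact (pi1Map f) (pi1Map g) ∧
      Function.Exact (pi1Map g) δ ∧
      Function.Exact δ (pi0Map f) ∧
      Function.Exact (pi0Map f) (pi0Map g) ∧
      Function.Surjective (pi0Map g) := by
  classical
  have hsurj := hatMap_g_surjective f g hg hfg hA
  have hδex : ∀ c : pi1 C, ∃ p : Coherent B × A,
      hatMap g p.1 = (c : Coherent C) ∧ f p.2 = (p.1 : ℕ+ → B) 1 := by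
    intro c
    obtain ⟨b, hb⟩ := hsurj (c : Coherent C)
    have hb1 : g ((b : ℕ+ → B) 1) = 0 := by
      have h1 : g ((b : ℕ+ → B) 1) = ((c : Coherent C) : ℕ+ → C) 1 :=
        congrArg (fun t : Coherent C => (t : ℕ+ → C) 1) hb
      have h2 : ((c : Coherent C) : ℕ+ → C) 1 = 0 := c.2
      rw [h2] at h1
      exact h1
    obtain ⟨a, ha⟩ := (hfg _).mp hb1
    exact ⟨(b, a), hb, ha⟩
  choose P hP1 hP2 using hδex
  let δ₀ : pi1 C → pi0 A := fun c => QuotientAddGroup.mk (P c).2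
  have inv : ∀ (c : pi1 C) (b : Coherent B) (a : A),
      hatMap g b = (c : Coherent C) → f a = (b : ℕ+ → B) 1 →
      δ₀ c = QuotientAddGroup.mk a := by
    intro c b a h1 h2
    have hker : hatMap g ((P c).1 - b) = 0 := by rw [map_sub, hP1, h1, sub_self]
    obtain ⟨α, hα⟩ := hat_exact f g hf hfg _ hker
    have hcomp : f ((α : ℕ+ → A) 1) = ((P c).1 : ℕ+ → B) 1 - (b : ℕ+ → B) 1 := by
      have h3 : f ((α : ℕ+ → A) 1) = (((P c).1 - b : Coherent B) : ℕ+ → B) 1 :=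
        congrArg (fun t : Coherent B => (t : ℕ+ → B) 1) hα
      rw [h3, AddSubgroup.coe_sub, Pi.sub_apply]
    have heq : (P c).2 - a = (α : ℕ+ → A) 1 := by
      apply hf
      rw [map_sub, hP2 c, h2, hcomp]
    have hmem : (P c).2 - a ∈ hull A := heq ▸ rho_one_mem_hull α
    refine (QuotientAddGroup.eq).mpr ?_
    have h5 : -((P c).2 - a) ∈ hull A := neg_mem hmem
    have h6 : -((P c).2 - a) = -(P c).2 + a := by abel
    rwa [h6] at h5
  have hadd : ∀ c c' : pi1 C, δ₀ (c + c') = δ₀ c + δ₀ c' := by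
    intro c c'
    have h1 : hatMap g ((P c).1 + (P c').1) = ((c + c' : pi1 C) : Coherent C) := by
      rw [map_add, hP1, hP1]; rfl
    have h2 : f ((P c).2 + (P c').2) = (((P c).1 + (P c').1 : Coherent B) : ℕ+ → B) 1 := by
      rw [map_add, hP2, hP2, AddSubgroup.coe_add, Pi.add_apply]
    rw [inv (c + c') _ _ h1 h2]
    rfl
  refine ⟨AddMonoidHom.mk' δ₀ hadd, ?_, ?_, ?_, ?_, ?_, ?_⟩
  · -- injectivity of pi1Map f
    intro x y h
    apply Subtype.ext; apply Subtype.ext; funext n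
    apply hf
    exact congrFun (congrArg (fun t : pi1 B => ((t : Coherent B) : ℕ+ → B)) h) n
  · -- exactness at pi1 B
    intro y
    constructor
    · intro hy
      have hyc : ∀ n : ℕ+, g (((y : Coherent B) : ℕ+ → B) n) = 0 := fun n =>
        congrFun (congrArg (fun t : pi1 C => ((t : Coherent C) : ℕ+ → C)) hy) n
      choose a ha using fun n => (hfg _).mp (hyc n)
      have hcoh : (fun n => a n) ∈ Coherent A := by
        intro n m
        apply hf
        rw [map_nsmul, ha, ha]
        exact (y : Coherent B).2 n m
      have ha1 : a 1 = 0 := by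
        apply hf
        rw [ha 1, map_zero]
        exact y.2
      refine ⟨⟨⟨fun n => a n, hcoh⟩, ha1⟩, ?_⟩
      apply Subtype.ext; apply Subtype.ext; funext n
      exact ha n
    · rintro ⟨x, rfl⟩
      apply Subtype.ext; apply Subtype.ext; funext n
      exact hfg.apply_apply_eq_zero (((x : Coherent A) : ℕ+ → A) n)
  · -- exactness at pi1 C
    intro c
    constructor
    · intro hc
      have hmem : (P c).2 ∈ hull A := by
        have : δ₀ c = 0 := hc
        rwa [QuotientAddGroup.eq_zero_iff] at this
      obtain ⟨α, hα1⟩ := exists_coherent_of_mem_hull hA hmem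
      have hgb' : hatMap g ((P c).1 - hatMap f α) = (c : Coherent C) := by
        rw [map_sub, hP1]
        have h0 : hatMap g (hatMap f α) = 0 := by
          apply Subtype.ext; funext n
          exact hfg.apply_apply_eq_zero _
        rw [h0, sub_zero]
      have hb'1 : (((P c).1 - hatMap f α : Coherent B) : ℕ+ → B) 1 = 0 := by
        rw [AddSubgroup.coe_sub, Pi.sub_apply]
        show ((P c).1 : ℕ+ → B) 1 - f ((α : ℕ+ → A) 1) = 0
        rw [hα1, ← hP2 c, sub_self]
      refine ⟨⟨(P c).1 - hatMap f α, hb'1⟩, ?_⟩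
      apply Subtype.ext
      exact hgb'
    · rintro ⟨y, rfl⟩
      have h1 : hatMap g (y : Coherent B) = ((pi1Map g y : pi1 C) : Coherent C) := rfl
      have h2 : f 0 = ((y : Coherent B) : ℕ+ → B) 1 := by
        rw [map_zero]
        exact (y.2 : ((y : Coherent B) : ℕ+ → B) 1 = 0).symm
      have h3 := inv (pi1Map g y) (y : Coherent B) 0 h1 h2
      show δ₀ (pi1Map g y) = 0
      rw [h3, QuotientAddGroup.mk_zero]
  · -- exactness at pi0 A
    intro x
    constructor
    · intro hx
      obtain ⟨a, rfl⟩ := QuotientAddGroup.mk_surjective x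
      have hfa : f a ∈ hull B := by
        have h1 : pi0Map f (QuotientAddGroup.mk a) = QuotientAddGroup.mk (f a) := rfl
        rw [h1, QuotientAddGroup.eq_zero_iff] at hx
        exact hx
      obtain ⟨b, hb1⟩ := exists_coherent_of_mem_hull hB hfa
      have hc1 : ((hatMap g b : Coherent C) : ℕ+ → C) 1 = 0 := by
        show g ((b : ℕ+ → B) 1) = 0
        rw [hb1]
        exact hfg.apply_apply_eq_zero a
      refine ⟨⟨hatMap g b, hc1⟩, ?_⟩
      show δ₀ ⟨hatMap g b, hc1⟩ = QuotientAddGroup.mk a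
      exact inv _ b a rfl hb1.symm
    · rintro ⟨c, rfl⟩
      show pi0Map f (δ₀ c) = 0
      have h1 : pi0Map f (δ₀ c) = QuotientAddGroup.mk (f (P c).2) := rfl
      rw [h1, QuotientAddGroup.eq_zero_iff, hP2 c]
      exact rho_one_mem_hull (P c).1
  · -- exactness at pi0 B
    intro y
    constructor
    · intro hy
      obtain ⟨b, rfl⟩ := QuotientAddGroup.mk_surjective y
      have hgb : g b ∈ hull C := by
        have h1 : pi0Map g (QuotientAddGroup.mk b) = QuotientAddGroup.mk (g b) := rfl
        rw [h1, QuotientAddGroup.eq_zero_iff] at hy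
        exact hy
      obtain ⟨KB, hKB⟩ := exists_nsmul_mem_hull hB
      obtain ⟨c', hc'⟩ := mem_hull_iff.mp hgb KB
      obtain ⟨b'', rfl⟩ := hg c'
      have hker : g (b - (KB : ℕ) • b'') = 0 := by
        rw [map_sub, map_nsmul, hc', sub_self]
      obtain ⟨a, ha⟩ := (hfg _).mp hker
      refine ⟨QuotientAddGroup.mk a, ?_⟩
      have h2 : pi0Map f (QuotientAddGroup.mk a) = QuotientAddGroup.mk (f a) := rfl
      rw [h2, ha, QuotientAddGroup.eq]
      have h3 : -(b - (KB : ℕ) • b'') + b = (KB : ℕ) • b'' := by abel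
      rw [h3]
      exact hKB b''
    · rintro ⟨x, rfl⟩
      obtain ⟨a, rfl⟩ := QuotientAddGroup.mk_surjective x
      have h1 : pi0Map g (pi0Map f (QuotientAddGroup.mk a))
          = QuotientAddGroup.mk (g (f a)) := rfl
      rw [h1, hfg.apply_apply_eq_zero, QuotientAddGroup.mk_zero]
  · -- surjectivity of pi0Map g
    intro y
    obtain ⟨c, rfl⟩ := QuotientAddGroup.mk_surjective y
    obtain ⟨b, rfl⟩ := hg c
    exact ⟨QuotientAddGroup.mk b, rfl⟩
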